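/- Let X be a locally compact Hausdorff space and let ν be a deficient topological measure on X. Then ν coincides with its own positive variation and total variation: ν(A) = ν⁺(A) = |ν|(A) for every open or closed set A (where ν⁺ and |ν| are computed from the restriction of ν to compact sets). Moreover, ν is monotone, finitely additive on disjoint open sets, and superadditive: if (A_t)_{t∈T} is a pairwise disjoint family of open or closed sets with at most one of the closed sets among them not compact, and ⊔_{t∈T} A_t ⊆ A with A open or closed, then ν(A) ≥ Σ_{t∈T} ν(A_t). -/

import Mathlib

open Set Classical
open scoped ENNReal NNReal

variable {X : Type*}

/-- The positive variation on an open set: `λ⁺(U) = sup{λ(K) : K ⊆ U, K compact}`. -/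
noncomputable def posVarOpen [TopologicalSpace X] (lam : Set X → EReal) (U : Set X) : EReal :=
  ⨆ (K : Set X) (_ : IsCompact K ∧ K ⊆ U), lam K

/-- The positive variation: the sup formula on open sets, and
`λ⁺(F) = inf{λ⁺(U) : F ⊆ U, U open}` on other (in particular closed) sets. -/
noncomputable def posVar [TopologicalSpace X] (lam : Set X → EReal) (A : Set X) : EReal :=
  if IsOpen A then posVarOpen lam A
  else ⨅ (U : Set X) (_ : IsOpen U ∧ A ⊆ U), posVarOpen lam U

/-- The total variation on an open set:
`|λ|(U) = sup{∑ᵢ |λ(Kᵢ)| : K₁, …, Kₙ pairwise disjoint compact subsets of U}`. -/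
noncomputable def totVarOpen [TopologicalSpace X] (lam : Set X → EReal) (U : Set X) : EReal :=
  ⨆ (n : ℕ) (K : Fin n → Set X)
    (_ : (∀ i, IsCompact (K i) ∧ K i ⊆ U) ∧ Pairwise (Function.onFun Disjoint K)),
      ∑ i, max (lam (K i)) (-(lam (K i)))

/-- The total variation: the sup formula on open sets, and
`|λ|(F) = inf{|λ|(U) : F ⊆ U, U open}` on other (in particular closed) sets. -/
noncomputable def totVar [TopologicalSpace X] (lam : Set X → EReal) (A : Set X) : EReal :=
  if IsOpen A then totVarOpen lam A
  else ⨅ (U : Set X) (_ : IsOpen U ∧ A ⊆ U), totVarOpen lam U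

/-- The negative variation `λ⁻ = (-λ)⁺`. -/
noncomputable def negVar [TopologicalSpace X] (lam : Set X → EReal) : Set X → EReal :=
  posVar (fun K => -(lam K))

/-- A deficient topological measure on a locally compact space `X`: a set function on open
and closed subsets of `X` with values in `[0,∞]`, not identically `∞`, finitely additive on
compact sets, inner compact regular on open sets, and outer regular on closed sets.
(Values on sets that are neither open nor closed are irrelevant.) -/
def IsDTME [TopologicalSpace X] (ν : Set X → EReal) : Prop :=
  (∀ A : Set X, IsOpen A ∨ IsClosed A → 0 ≤ ν A) ∧
  (∃ A : Set X, (IsOpen A ∨ IsClosed A) ∧ ν A ≠ ⊤) ∧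
  (∀ C K : Set X, IsCompact C → IsCompact K → Disjoint C K → ν (C ∪ K) = ν C + ν K) ∧
  (∀ U : Set X, IsOpen U → ν U = ⨆ (K : Set X) (_ : IsCompact K ∧ K ⊆ U), ν K) ∧
  (∀ F : Set X, IsClosed F → ν F = ⨅ (U : Set X) (_ : IsOpen U ∧ F ⊆ U), ν U)

/-- A deficient topological measure on a locally compact space `X`: a set function on open
and closed subsets of `X` with values in `[0,∞]`, not identically `∞`, finitely additive on
compact sets, inner compact regular on open sets, and outer regular on closed sets.
(Values on sets that are neither open nor closed are irrelevant.) -/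
def IsDTM [TopologicalSpace X] (ν : Set X → ℝ≥0∞) : Prop :=
  (∃ A : Set X, (IsOpen A ∨ IsClosed A) ∧ ν A ≠ ⊤) ∧
  (∀ C K : Set X, IsCompact C → IsCompact K → Disjoint C K → ν (C ∪ K) = ν C + ν K) ∧
  (∀ U : Set X, IsOpen U → ν U = ⨆ (K : Set X) (_ : IsCompact K ∧ K ⊆ U), ν K) ∧
  (∀ F : Set X, IsClosed F → ν F = ⨅ (U : Set X) (_ : IsOpen U ∧ F ⊆ U), ν U)

/-! ### Auxiliary lemmas -/

theorem myCoe_iSup {ι : Sort*} [Nonempty ι] (f : ι → ℝ≥0∞) :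
    ((⨆ i, f i : ℝ≥0∞) : EReal) = ⨆ i, (f i : EReal) := by
  refine le_antisymm ?_ (iSup_le fun i => EReal.coe_ennreal_le_coe_ennreal_iff.2 (le_iSup f i))
  have h0 : (0 : EReal) ≤ ⨆ i, (f i : EReal) :=
    le_trans (EReal.coe_ennreal_nonneg _)
      (le_iSup (fun i => ((f i : ℝ≥0∞) : EReal)) (Classical.arbitrary ι))
  lift (⨆ i, ((f i : ℝ≥0∞) : EReal)) to ℝ≥0∞ using h0 with b hb
  rw [EReal.coe_ennreal_le_coe_ennreal_iff]
  exact iSup_le fun i => EReal.coe_ennreal_le_coe_ennreal_iff.1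
    (hb ▸ le_iSup (fun i => ((f i : ℝ≥0∞) : EReal)) i)

theorem myCoe_iInf {ι : Sort*} (f : ι → ℝ≥0∞) :
    ((⨅ i, f i : ℝ≥0∞) : EReal) = ⨅ i, (f i : EReal) := by
  cases isEmpty_or_nonempty ι
  · simp [iInf_of_empty, EReal.coe_ennreal_top]
  refine le_antisymm (le_iInf fun i => EReal.coe_ennreal_le_coe_ennreal_iff.2 (iInf_le f i)) ?_
  have h0 : (0 : EReal) ≤ ⨅ i, (f i : EReal) := le_iInf fun i => EReal.coe_ennreal_nonneg _
  lift (⨅ i, ((f i : ℝ≥0∞) : EReal)) to ℝ≥0∞ using h0 with b hb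
  rw [EReal.coe_ennreal_le_coe_ennreal_iff]
  exact le_iInf fun i => EReal.coe_ennreal_le_coe_ennreal_iff.1
    (hb ▸ iInf_le (fun i => ((f i : ℝ≥0∞) : EReal)) i)

theorem myCoe_sum {ι : Type*} (s : Finset ι) (f : ι → ℝ≥0∞) :
    ((∑ i ∈ s, f i : ℝ≥0∞) : EReal) = ∑ i ∈ s, (f i : EReal) :=
  map_sum (⟨⟨(↑·), EReal.coe_ennreal_zero⟩, EReal.coe_ennreal_add⟩ : ℝ≥0∞ →+ EReal) f s

theorem myMax (x : ℝ≥0∞) : max (x : EReal) (-(x : EReal)) = (x : EReal) := by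
  have h1 : -(x : EReal) ≤ 0 := by
    simpa using EReal.neg_le_neg_iff.2 (EReal.coe_ennreal_nonneg x)
  exact max_eq_left (h1.trans (EReal.coe_ennreal_nonneg x))

section DTMAux

variable [TopologicalSpace X] {ν : Set X → ℝ≥0∞}
variable (hadd : ∀ C K : Set X, IsCompact C → IsCompact K → Disjoint C K → ν (C ∪ K) = ν C + ν K)
variable (hinner : ∀ U : Set X, IsOpen U → ν U = ⨆ (K : Set X) (_ : IsCompact K ∧ K ⊆ U), ν K)
variable (houter : ∀ F : Set X, IsClosed F → ν F = ⨅ (U : Set X) (_ : IsOpen U ∧ F ⊆ U), ν U)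

include hinner in
theorem mono_co {K U : Set X} (hK : IsCompact K) (hU : IsOpen U) (hKU : K ⊆ U) : ν K ≤ ν U := by
  rw [hinner U hU]
  exact le_iSup₂ (f := fun (K : Set X) (_ : IsCompact K ∧ K ⊆ U) => ν K) K ⟨hK, hKU⟩

include houter in
theorem mono_clo {F U : Set X} (hF : IsClosed F) (hU : IsOpen U) (hFU : F ⊆ U) : ν F ≤ ν U := by
  rw [houter F hF]
  exact iInf₂_le U ⟨hU, hFU⟩

include houter in
theorem mono_cc [T2Space X] {K F : Set X} (hK : IsCompact K) (hF : IsClosed F) (hKF : K ⊆ F) :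
    ν K ≤ ν F := by
  rw [houter F hF]
  exact le_iInf₂ fun U hU => mono_clo houter hK.isClosed hU.1 (hKF.trans hU.2)

include hinner houter in
theorem mono_gen [T2Space X] {A B : Set X} (hA : IsOpen A ∨ IsClosed A)
    (hB : IsOpen B ∨ IsClosed B) (hAB : A ⊆ B) : ν A ≤ ν B := by
  rcases hA with hA | hA
  · rw [hinner A hA]
    refine iSup₂_le fun K hK => ?_
    rcases hB with hB | hB
    · exact mono_co hinner hK.1 hB (hK.2.trans hAB)
    · exact mono_cc houter hK.1 hB (hK.2.trans hAB)
  · rcases hB with hB | hB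
    · exact mono_clo houter hA hB hAB
    · rw [houter B hB]
      exact le_iInf₂ fun U hU => mono_clo houter hA hU.1 (hAB.trans hU.2)

include hadd hinner houter in
theorem nu_empty [T2Space X]
    (hfin : ∃ A : Set X, (IsOpen A ∨ IsClosed A) ∧ ν A ≠ ⊤) : ν (∅ : Set X) = 0 := by
  obtain ⟨A, hA, hAfin⟩ := hfin
  have hne : ν (∅ : Set X) ≠ ⊤ := by
    intro h
    exact hAfin (top_le_iff.1
      (h ▸ mono_gen hinner houter (Or.inl isOpen_empty) hA (empty_subset A)))
  have h2 : ν (∅ : Set X) + 0 = ν ∅ + ν ∅ := by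
    rw [add_zero]
    simpa using hadd ∅ ∅ isCompact_empty isCompact_empty disjoint_bot_left
  exact ((ENNReal.add_right_inj hne).1 h2).symm

include hadd in
theorem nu_biUnion {T : Type*} (hempty : ν (∅ : Set X) = 0) (S : Finset T) (K : T → Set X)
    (hK : ∀ t ∈ S, IsCompact (K t)) (hdisj : Set.Pairwise ↑S (Function.onFun Disjoint K)) :
    ν (⋃ t ∈ S, K t) = ∑ t ∈ S, ν (K t) := by
  classical
  induction S using Finset.induction_on with
  | empty => simpa
  | @insert a s ha ih =>
    rw [Finset.set_biUnion_insert, Finset.sum_insert ha]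
    have hKa := hK a (Finset.mem_insert_self a s)
    have hKs : ∀ t ∈ s, IsCompact (K t) := fun t ht => hK t (Finset.mem_insert_of_mem ht)
    have hd2 : Disjoint (K a) (⋃ t ∈ s, K t) := by
      rw [Set.disjoint_iUnion_right]
      intro t
      rw [Set.disjoint_iUnion_right]
      intro ht
      exact hdisj (by simp) (by simp [ht]) (fun h => ha (h ▸ ht))
    rw [hadd _ _ hKa (s.isCompact_biUnion hKs) hd2,
      ih hKs (hdisj.mono (Finset.coe_subset.2 (Finset.subset_insert a s)))]

include hadd hinner houter in
theorem two_set [T2Space X] [LocallyCompactSpace X]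
    {C F W : Set X} (hC : IsCompact C) (hF : IsClosed F) (hd : Disjoint C F)
    (hW : IsOpen W) (hCW : C ⊆ W) (hFW : F ⊆ W) : ν C + ν F ≤ ν W := by
  obtain ⟨L, hL, hCL, hLWF⟩ :=
    exists_compact_between hC (hW.sdiff hF) (subset_diff.2 ⟨hCW, hd⟩)
  obtain ⟨hLW, hLF⟩ := subset_diff.1 hLWF
  have h1 : ν C ≤ ν L := mono_cc houter hC hL.isClosed (hCL.trans interior_subset)
  have h2 : ν F ≤ ν (W \ L) := by
    rw [houter F hF]
    exact iInf₂_le (W \ L) ⟨hW.sdiff hL.isClosed, subset_diff.2 ⟨hFW, hLF.symm⟩⟩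
  refine le_trans (add_le_add h1 h2) ?_
  rw [hinner (W \ L) (hW.sdiff hL.isClosed),
    ENNReal.add_biSup' ⟨∅, isCompact_empty, empty_subset _⟩ _]
  refine iSup₂_le fun M hM => ?_
  have hdLM : Disjoint L M := ((subset_diff.1 hM.2).2).symm
  rw [← hadd L M hL hM.1 hdLM]
  exact mono_co hinner (hL.union hM.1) hW (union_subset hLW ((subset_diff.1 hM.2).1))

include hadd hinner houter in
theorem dtm_helper [T2Space X] [LocallyCompactSpace X] (hempty : ν (∅ : Set X) = 0)
    {T : Type} (A : T → Set X) (F W : Set X) (S : Finset T)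
    (h' : ∀ t ∈ S, IsCompact (A t) ∨ IsOpen (A t))
    (hdisj : Set.Pairwise ↑S (Function.onFun Disjoint A))
    (hF : IsClosed F) (hdF : ∀ t ∈ S, Disjoint (A t) F)
    (hW : IsOpen W) (hAW : ∀ t ∈ S, A t ⊆ W) (hFW : F ⊆ W) :
    ∑ t ∈ S, ν (A t) + ν F ≤ ν W := by
  refine ENNReal.le_of_forall_pos_le_add fun ε hε hWfin => ?_
  set δ : ℝ≥0∞ := (ε : ℝ≥0∞) / S.card with hδdef
  have key : ∀ t : T, ∃ K : Set X, IsCompact K ∧ K ⊆ A t ∧ (t ∈ S → ν (A t) ≤ ν K + δ) := by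
    intro t
    by_cases htS : t ∈ S
    · rcases h' t htS with hc | ho
      · exact ⟨A t, hc, Subset.rfl, fun _ => le_self_add⟩
      · by_cases h0 : ν (A t) = 0
        · exact ⟨∅, isCompact_empty, empty_subset _, fun _ => by simp [h0]⟩
        · have hfin : ν (A t) ≠ ⊤ :=
            (lt_of_le_of_lt
              (mono_gen hinner houter (Or.inl ho) (Or.inl hW) (hAW t htS)) hWfin).ne
          have hδ0 : δ ≠ 0 := by
            have hScard : (S.card : ℝ≥0∞) ≠ ⊤ := ENNReal.natCast_ne_top _
            exact (ENNReal.div_pos (by exact_mod_cast hε.ne') hScard).ne'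
          have hlt : ν (A t) - δ < ⨆ (K : Set X) (_ : IsCompact K ∧ K ⊆ A t), ν K := by
            rw [← hinner (A t) ho]
            exact ENNReal.sub_lt_self hfin h0 hδ0
          obtain ⟨K, hK⟩ := lt_iSup_iff.1 hlt
          obtain ⟨hKp, hK⟩ := lt_iSup_iff.1 hK
          exact ⟨K, hKp.1, hKp.2, fun _ => tsub_le_iff_right.1 hK.le⟩
    · exact ⟨∅, isCompact_empty, empty_subset _, fun h => absurd h htS⟩
  choose K hKc hKsub hKle using key
  have hsum : ∑ t ∈ S, ν (A t) ≤ ∑ t ∈ S, ν (K t) + S.card • δ := by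
    calc ∑ t ∈ S, ν (A t) ≤ ∑ t ∈ S, (ν (K t) + δ) :=
          Finset.sum_le_sum fun t ht => hKle t ht
      _ = ∑ t ∈ S, ν (K t) + S.card • δ := by
          rw [Finset.sum_add_distrib, Finset.sum_const]
  have hcore : ∑ t ∈ S, ν (K t) + ν F ≤ ν W := by
    rw [← nu_biUnion hadd hempty S K (fun t _ => hKc t)
      (fun t ht u hu hne => (hdisj ht hu hne).mono (hKsub t) (hKsub u))]
    refine two_set hadd hinner houter (S.isCompact_biUnion fun t _ => hKc t) hF ?_ hW
      (iUnion₂_subset fun t ht => (hKsub t).trans (hAW t ht)) hFW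
    rw [Set.disjoint_iUnion_left]
    intro t
    rw [Set.disjoint_iUnion_left]
    intro ht
    exact (hdF t ht).mono_left (hKsub t)
  have hδsum : S.card • δ ≤ (ε : ℝ≥0∞) := by
    rw [nsmul_eq_mul, hδdef]
    exact ENNReal.mul_div_le
  calc ∑ t ∈ S, ν (A t) + ν F
      ≤ (∑ t ∈ S, ν (K t) + S.card • δ) + ν F := add_le_add hsum (le_refl _)
    _ = (∑ t ∈ S, ν (K t) + ν F) + S.card • δ := by ring
    _ ≤ ν W + S.card • δ := add_le_add hcore (le_refl _)
    _ ≤ ν W + ε := add_le_add (le_refl _) hδsum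

include hadd hinner in
theorem open_additive {U V : Set X} (hU : IsOpen U) (hV : IsOpen V) (hUV : Disjoint U V) :
    ν (U ∪ V) = ν U + ν V := by
  refine le_antisymm ?_ ?_
  · rw [hinner (U ∪ V) (hU.union hV)]
    refine iSup₂_le fun K hK => ?_
    have hKU : IsCompact (K \ V) := hK.1.diff hV
    have hKV : IsCompact (K \ U) := hK.1.diff hU
    have hsubU : K \ V ⊆ U := fun x hx => (hK.2 hx.1).resolve_right hx.2
    have hsubV : K \ U ⊆ V := fun x hx => (hK.2 hx.1).resolve_left hx.2
    have hcover : K = (K \ V) ∪ (K \ U) := by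
      refine Subset.antisymm (fun x hx => ?_) (union_subset diff_subset diff_subset)
      rcases hK.2 hx with hxU | hxV
      · exact Or.inl ⟨hx, fun hxV => (disjoint_left.1 hUV) hxU hxV⟩
      · exact Or.inr ⟨hx, fun hxU => (disjoint_left.1 hUV) hxU hxV⟩
    calc ν K = ν ((K \ V) ∪ (K \ U)) := by rw [← hcover]
      _ = ν (K \ V) + ν (K \ U) := hadd _ _ hKU hKV (hUV.mono hsubU hsubV)
      _ ≤ ν U + ν V :=
          add_le_add (mono_co hinner hKU hU hsubU) (mono_co hinner hKV hV hsubV)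
  · rw [hinner U hU, hinner V hV]
    refine ENNReal.biSup_add_biSup_le' ⟨∅, isCompact_empty, empty_subset _⟩
      ⟨∅, isCompact_empty, empty_subset _⟩ fun K hK L hL => ?_
    rw [← hadd K L hK.1 hL.1 (hUV.mono hK.2 hL.2)]
    exact mono_co hinner (hK.1.union hL.1) (hU.union hV)
      (union_subset (hK.2.trans subset_union_left) (hL.2.trans subset_union_right))

include hadd hinner houter in
theorem superadd_open [T2Space X] [LocallyCompactSpace X] (hempty : ν (∅ : Set X) = 0)
    {T : Type} (A : T → Set X) (W : Set X)
    (hA : ∀ t, IsOpen (A t) ∨ IsClosed (A t))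
    (hdisj : Pairwise (Function.onFun Disjoint A))
    (hone : {t : T | IsClosed (A t) ∧ ¬ IsCompact (A t)}.Subsingleton)
    (hW : IsOpen W) (hsub : (⋃ t, A t) ⊆ W) : ∑' t, ν (A t) ≤ ν W := by
  rw [ENNReal.tsum_eq_iSup_sum]
  refine iSup_le fun S => ?_
  have hAW : ∀ t, A t ⊆ W := fun t => (subset_iUnion A t).trans hsub
  by_cases hex : ∃ t₀ ∈ S, ¬(IsCompact (A t₀) ∨ IsOpen (A t₀))
  · obtain ⟨t₀, ht₀S, ht₀⟩ := hex
    push_neg at ht₀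
    have ht₀cl : IsClosed (A t₀) := (hA t₀).resolve_left ht₀.2
    have hgoal := dtm_helper hadd hinner houter hempty A (A t₀) W (S.erase t₀)
      (fun t ht => by
        by_contra hcon
        push_neg at hcon
        have hcl : IsClosed (A t) := (hA t).resolve_left hcon.2
        exact (Finset.ne_of_mem_erase ht) (hone ⟨hcl, hcon.1⟩ ⟨ht₀cl, ht₀.1⟩))
      ((hdisj.set_pairwise _))
      ht₀cl (fun t ht => hdisj (Finset.ne_of_mem_erase ht))
      hW (fun t _ => hAW t) (hAW t₀)
    calc ∑ t ∈ S, ν (A t) = ∑ t ∈ S.erase t₀, ν (A t) + ν (A t₀) :=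
          (Finset.sum_erase_add S _ ht₀S).symm
      _ ≤ ν W := hgoal
  · push_neg at hex
    have hgoal := dtm_helper hadd hinner houter hempty A ∅ W S
      (fun t ht => hex t ht)
      (hdisj.set_pairwise _) isClosed_empty (fun t _ => disjoint_empty _)
      hW (fun t _ => hAW t) (empty_subset W)
    calc ∑ t ∈ S, ν (A t) = ∑ t ∈ S, ν (A t) + ν ∅ := by rw [hempty, add_zero]
      _ ≤ ν W := hgoal

include hinner in
theorem nuOpen_posVar {U : Set X} (hU : IsOpen U) :
    (ν U : EReal) = posVarOpen (fun K => ((ν K : EReal))) U := by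
  have hne : Nonempty {K : Set X // IsCompact K ∧ K ⊆ U} :=
    ⟨⟨∅, isCompact_empty, empty_subset U⟩⟩
  rw [posVarOpen, iSup_subtype', hinner U hU, iSup_subtype', myCoe_iSup]

include hadd hinner houter in
theorem nuOpen_totVar [T2Space X]
    (hfin : ∃ A : Set X, (IsOpen A ∨ IsClosed A) ∧ ν A ≠ ⊤)
    {U : Set X} (hU : IsOpen U) :
    (ν U : EReal) = totVarOpen (fun K => ((ν K : EReal))) U := by
  have hempty := nu_empty hadd hinner houter hfin
  refine le_antisymm ?_ ?_
  · rw [nuOpen_posVar hinner hU, posVarOpen]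
    refine iSup₂_le fun K hK => ?_
    refine le_iSup_of_le 1 (le_iSup_of_le (fun _ => K) (le_iSup_of_le
      ⟨fun _ => ⟨hK.1, hK.2⟩, fun i j hij => absurd (Subsingleton.elim i j) hij⟩ ?_))
    rw [Fin.sum_univ_one, myMax]
  · refine iSup_le fun n => iSup_le fun K => iSup_le fun hK => ?_
    have heq : ∑ i : Fin n, max ((ν (K i) : EReal)) (-(ν (K i) : EReal))
        = ((∑ i : Fin n, ν (K i) : ℝ≥0∞) : EReal) := by
      rw [myCoe_sum]
      exact Finset.sum_congr rfl fun i _ => myMax _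
    rw [heq, EReal.coe_ennreal_le_coe_ennreal_iff,
      ← nu_biUnion hadd hempty Finset.univ K (fun i _ => (hK.1 i).1)
        (fun i _ j _ hij => hK.2 hij)]
    exact mono_co hinner (Finset.univ.isCompact_biUnion fun i _ => (hK.1 i).1) hU
      (iUnion₂_subset fun i _ => (hK.1 i).2)

end DTMAux


/-- Lemma 3.4: a deficient topological measure `ν` coincides with its own positive and total
variations (computed from the restriction of `ν` to compact sets), and moreover `ν` is
monotone, finitely additive on disjoint open sets, and superadditive. -/
theorem dtm_eq_posVar_eq_totVar
    [TopologicalSpace X] [LocallyCompactSpace X] [T2Space X]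
    (ν : Set X → ℝ≥0∞) (hν : IsDTM ν) :
    (∀ A : Set X, IsOpen A ∨ IsClosed A →
      (ν A : EReal) = posVar (fun K => ((ν K : EReal))) A ∧
      (ν A : EReal) = totVar (fun K => ((ν K : EReal))) A) ∧
    (∀ A B : Set X, (IsOpen A ∨ IsClosed A) → (IsOpen B ∨ IsClosed B) → A ⊆ B →
      ν A ≤ ν B) ∧
    (∀ U V : Set X, IsOpen U → IsOpen V → Disjoint U V → ν (U ∪ V) = ν U + ν V) ∧
    (∀ {T : Type} (A : T → Set X) (B : Set X),
      (∀ t, IsOpen (A t) ∨ IsClosed (A t)) →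
      Pairwise (Function.onFun Disjoint A) →
      {t : T | IsClosed (A t) ∧ ¬ IsCompact (A t)}.Subsingleton →
      (IsOpen B ∨ IsClosed B) → (⋃ t, A t) ⊆ B →
      ∑' t, ν (A t) ≤ ν B) := by
  obtain ⟨hfin, hadd, hinner, houter⟩ := hν
  have hempty := nu_empty hadd hinner houter hfin
  refine ⟨?_, ?_, ?_, ?_⟩
  · intro A hA
    by_cases hAo : IsOpen A
    · constructor
      · unfold posVar
        rw [if_pos hAo]
        exact nuOpen_posVar hinner hAo
      · unfold totVar
        rw [if_pos hAo]
        exact nuOpen_totVar hadd hinner houter hfin hAo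
    · have hAc : IsClosed A := hA.resolve_left hAo
      have hiInf : ∀ (g : Set X → EReal), (∀ U : Set X, IsOpen U → (ν U : EReal) = g U) →
          (ν A : EReal) = ⨅ (U : Set X) (_ : IsOpen U ∧ A ⊆ U), g U := by
        intro g hg
        have hcongr : (⨅ (U : Set X) (_ : IsOpen U ∧ A ⊆ U), g U)
            = ⨅ (U : Set X) (_ : IsOpen U ∧ A ⊆ U), ((ν U : EReal)) :=
          iInf_congr fun U => iInf_congr fun hU => (hg U hU.1).symm
        rw [hcongr, iInf_subtype', houter A hAc, iInf_subtype', myCoe_iInf]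
      constructor
      · unfold posVar
        rw [if_neg hAo]
        exact hiInf _ (fun U hU => nuOpen_posVar hinner hU)
      · unfold totVar
        rw [if_neg hAo]
        exact hiInf _ (fun U hU => nuOpen_totVar hadd hinner houter hfin hU)
  · exact fun A B hA hB hAB => mono_gen hinner houter hA hB hAB
  · exact fun U V hU hV hUV => open_additive hadd hinner hU hV hUV
  · intro T A B hA hdisj hone hB hsub
    rcases hB with hB | hB
    · exact superadd_open hadd hinner houter hempty A B hA hdisj hone hB hsub
    · rw [houter B hB]
      exact le_iInf₂ fun W hW =>
        superadd_open hadd hinner houter hempty A W hA hdisj hone hW.1 (hsub.trans hW.2)
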